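/- There exist a finite bottom set B, an adjacency function Adj assigning to each b ∈ B a nonempty subset Adj(b) ⊆ {u,v,w}, and a red-candidate function In assigning to each b ∈ B a nonempty subset In(b) ⊆ Adj(b), such that for every linear order ≺ on B and every red-edge selection r (r(b) ∈ In(b) for all b) for which ≺ satisfies the red-edge constraint, cr(≺) is strictly greater than the minimum of cr(≺') over all linear orders ≺' on B. (This is Theorem 2: there exists an AF with an extension of size 3 for which solving AFCrossMinREC results in more edge crossings than solving AFCrossMin.) -/

import Mathlib

/-- `Above u v w s t` says that top vertex `s` is drawn above top vertex `t`,
where the top layer consists of `u`, `v`, `w` drawn in this order from top to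
bottom. -/
def Above {T : Type} (u v w : T) (s t : T) : Prop :=
  (s = u ∧ t = v) ∨ (s = u ∧ t = w) ∨ (s = v ∧ t = w)

/-- Crossing count of a 2-layer drawing with top layer `u, v, w` (top to bottom):
the number of unordered pairs of edges that cross, counted via the ordered pairs
of edges `((s,a),(t,b))` with `s ∈ Adj a`, `t ∈ Adj b`, `s` drawn above `t` and
`b ≺ a`. -/
noncomputable def crossNum3 {T B : Type} (u v w : T) (Adj : B → Set T)
    (lt : B → B → Prop) : ℕ :=
  {q : (T × B) × (T × B) | q.1.1 ∈ Adj q.1.2 ∧ q.2.1 ∈ Adj q.2.2 ∧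
    Above u v w q.1.1 q.2.1 ∧ lt q.2.2 q.1.2}.ncard

/-- The red-edge constraint for a red-edge selection `r` in a 3-top-vertex
drawing: no two red edges cross. -/
def REC3 {T B : Type} (u v w : T) (r : B → T) (lt : B → B → Prop) : Prop :=
  ∀ a b : B, a ≠ b →
    ¬ ((Above u v w (r a) (r b) ∧ lt b a) ∨ (Above u v w (r b) (r a) ∧ lt a b))

lemma cross_two {T : Type} (u v w : T) (huv : u ≠ v) (huw : u ≠ w) (hvw : v ≠ w)
    (lt : Bool → Bool → Prop) (h : ∀ a b : Bool, lt b a ↔ b = true ∧ a = false) :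
    crossNum3 u v w (fun b : Bool => cond b ({v, w} : Set T) {u, w}) lt = 2 := by
  have hset : {q : (T × Bool) × (T × Bool) | q.1.1 ∈ cond q.1.2 ({v, w} : Set T) {u, w} ∧
      q.2.1 ∈ cond q.2.2 ({v, w} : Set T) {u, w} ∧
      Above u v w q.1.1 q.2.1 ∧ lt q.2.2 q.1.2} =
      {((u, false), (v, true)), ((u, false), (w, true))} := by
    ext ⟨⟨s, a⟩, ⟨t, b⟩⟩
    constructor
    · rintro ⟨h1, h2, h3, h4⟩
      obtain ⟨rfl, rfl⟩ : b = true ∧ a = false := (h a b).mp h4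
      simp only [cond_false, cond_true, Set.mem_insert_iff, Set.mem_singleton_iff] at h1 h2 ⊢
      rcases h3 with ⟨rfl, rfl⟩ | ⟨rfl, rfl⟩ | ⟨rfl, rfl⟩
      · simp
      · simp
      · exfalso
        rcases h1 with h1 | h1
        · exact huv h1.symm
        · exact hvw h1
    · intro hmem
      simp only [Set.mem_insert_iff, Set.mem_singleton_iff, Prod.mk.injEq] at hmem
      rcases hmem with ⟨⟨rfl, rfl⟩, rfl, rfl⟩ | ⟨⟨rfl, rfl⟩, rfl, rfl⟩
      · exact ⟨by simp, by simp, Or.inl ⟨rfl, rfl⟩, (h false true).mpr ⟨rfl, rfl⟩⟩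
      · exact ⟨by simp, by simp, Or.inr (Or.inl ⟨rfl, rfl⟩), (h false true).mpr ⟨rfl, rfl⟩⟩
  unfold crossNum3
  rw [hset]
  rw [Set.ncard_pair (by simp [Prod.ext_iff, hvw])]

lemma cross_one {T : Type} (u v w : T) (huv : u ≠ v) (huw : u ≠ w) (hvw : v ≠ w)
    (lt : Bool → Bool → Prop) (h : ∀ a b : Bool, lt b a ↔ b = false ∧ a = true) :
    crossNum3 u v w (fun b : Bool => cond b ({v, w} : Set T) {u, w}) lt = 1 := by
  have hset : {q : (T × Bool) × (T × Bool) | q.1.1 ∈ cond q.1.2 ({v, w} : Set T) {u, w} ∧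
      q.2.1 ∈ cond q.2.2 ({v, w} : Set T) {u, w} ∧
      Above u v w q.1.1 q.2.1 ∧ lt q.2.2 q.1.2} =
      {((v, true), (w, false))} := by
    ext ⟨⟨s, a⟩, ⟨t, b⟩⟩
    constructor
    · rintro ⟨h1, h2, h3, h4⟩
      obtain ⟨rfl, rfl⟩ : b = false ∧ a = true := (h a b).mp h4
      simp only [cond_false, cond_true, Set.mem_insert_iff, Set.mem_singleton_iff] at h1 h2 ⊢
      rcases h3 with ⟨rfl, rfl⟩ | ⟨rfl, rfl⟩ | ⟨rfl, rfl⟩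
      · exfalso
        rcases h1 with h1 | h1
        · exact huv h1
        · exact huw h1
      · exfalso
        rcases h1 with h1 | h1
        · exact huv h1
        · exact huw h1
      · simp
    · intro hmem
      simp only [Set.mem_singleton_iff, Prod.mk.injEq] at hmem
      obtain ⟨⟨rfl, rfl⟩, rfl, rfl⟩ := hmem
      exact ⟨by simp, by simp, Or.inr (Or.inr ⟨rfl, rfl⟩), (h true false).mpr ⟨rfl, rfl⟩⟩
  unfold crossNum3
  rw [hset, Set.ncard_singleton]

/-- Theorem 2: there exists an AF with an extension of size 3 (modelled by the
top vertices `u`, `v`, `w`, a bottom set `B`, an adjacency function `Adj` and a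
red-candidate function `In`) for which solving AFCrossMinREC results in strictly
more edge crossings than solving AFCrossMin: every order admitting a red-edge
selection that satisfies the red-edge constraint has strictly more crossings than
the minimum over all orders. -/
theorem stmt8 {T : Type} (u v w : T)
    (huv : u ≠ v) (huw : u ≠ w) (hvw : v ≠ w) :
    ∃ (B : Type) (_ : Fintype B) (Adj Inc : B → Set T),
      (∀ b, Adj b ⊆ {u, v, w}) ∧ (∀ b, (Adj b).Nonempty) ∧
      (∀ b, Inc b ⊆ Adj b) ∧ (∀ b, (Inc b).Nonempty) ∧
      ∀ lt : B → B → Prop, IsStrictTotalOrder B lt →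
        ∀ r : B → T, (∀ b, r b ∈ Inc b) → REC3 u v w r lt →
          crossNum3 u v w Adj lt >
            sInf {n : ℕ | ∃ lt' : B → B → Prop, IsStrictTotalOrder B lt' ∧
              crossNum3 u v w Adj lt' = n} := by
  refine ⟨Bool, inferInstance,
    (fun b : Bool => cond b ({v, w} : Set T) {u, w}),
    (fun b : Bool => cond b ({v} : Set T) {w}), ?_, ?_, ?_, ?_, ?_⟩
  · intro b; cases b <;> intro x hx <;> simp at hx <;> rcases hx with rfl | rfl <;> simp
  · intro b; cases b
    · exact ⟨u, by simp⟩
    · exact ⟨v, by simp⟩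
  · intro b; cases b <;> intro x hx <;> simp at hx <;> subst hx <;> simp
  · intro b; cases b
    · exact ⟨w, by simp⟩
    · exact ⟨v, by simp⟩
  · intro lt hlt r hr hrec
    have hrf : r false = w := by simpa using hr false
    have hrt : r true = v := by simpa using hr true
    have htf : lt true false := by
      rcases (by by_contra hc; exact hc (Or.inr (Or.inl (hlt.trichotomous false true (fun h => hc (Or.inl h)) (fun h => hc (Or.inr (Or.inr h)))))) : lt false true ∨ false = true ∨ lt true false) with hft | heq | htf
      · exfalso
        apply hrec false true (by simp)
        right
        refine ⟨?_, hft⟩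
        rw [hrf, hrt]
        right; right; exact ⟨rfl, rfl⟩
      · exact absurd heq (by simp)
      · exact htf
    have hnft : ¬ lt false true := fun hft =>
      hlt.irrefl false (hlt.trans _ _ _ hft htf)
    have hchar : ∀ a b : Bool, lt b a ↔ b = true ∧ a = false := by
      intro a b
      constructor
      · intro hba
        cases a <;> cases b
        · exact absurd hba (hlt.irrefl false)
        · exact ⟨rfl, rfl⟩
        · exact absurd hba hnft
        · exact absurd hba (hlt.irrefl true)
      · rintro ⟨rfl, rfl⟩; exact htf
    rw [cross_two u v w huv huw hvw lt hchar]
    have h1mem : (1 : ℕ) ∈ {n : ℕ | ∃ lt' : Bool → Bool → Prop, IsStrictTotalOrder Bool lt' ∧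
        crossNum3 u v w (fun b : Bool => cond b ({v, w} : Set T) {u, w}) lt' = n} := by
      refine ⟨fun a b => a = false ∧ b = true, ?_, ?_⟩
      · exact { trichotomous := by decide, irrefl := by decide, trans := by decide }
      · exact cross_one u v w huv huw hvw _ (fun a b => Iff.rfl)
    have := Nat.sInf_le h1mem
    omega
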